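/- For every real α with 0 < α < 2, the function (ξ, η, θ, φ) ↦ ((ξ + sin φ)² + (η − sin θ)² + (2 − cos θ − cos φ)²)^{−α/2} is Lebesgue integrable on [−π, π]⁴ (it is defined off the measure-zero set where the denominator vanishes). -/

import Mathlib

open Real MeasureTheory Set

private lemma absRpowIntOn {s : ℝ} (h0 : 0 < s) (h1 : s < 1) {M : ℝ} (hM : 0 ≤ M) :
    IntegrableOn (fun u : ℝ => |u| ^ (-s)) (Set.Icc (-M) M) := by
  have key : ∀ c : ℝ, 0 ≤ c → IntervalIntegrable (fun u : ℝ => |u| ^ (-s)) volume 0 c := by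
    intro c hc
    have h := intervalIntegral.intervalIntegrable_rpow' (a := 0) (b := c) (r := -s)
      (by linarith)
    rw [intervalIntegrable_iff] at h ⊢
    refine h.congr_fun (fun x hx => ?_) measurableSet_uIoc
    rw [Set.uIoc_of_le hc] at hx
    rw [abs_of_pos hx.1]
  have h2 : IntervalIntegrable (fun u : ℝ => |u| ^ (-s)) volume 0 (-M) := by
    rw [IntervalIntegrable.iff_comp_neg]
    simpa using key M hM
  have h3 := h2.symm.trans (key M hM)
  rwa [intervalIntegrable_iff_integrableOn_Icc_of_le (by linarith)] at h3

private lemma translateIntOn {s : ℝ} (h0 : 0 < s) (h1 : s < 1) {a : ℝ} (ha : |a| ≤ Real.pi) :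
    IntegrableOn (fun x : ℝ => |x + a| ^ (-s)) (Set.Icc (-Real.pi) Real.pi) := by
  have pi_pos := Real.pi_pos
  have big := absRpowIntOn h0 h1 (M := 2 * Real.pi) (by positivity)
  have hbig : IntervalIntegrable (fun u : ℝ => |u| ^ (-s)) volume (-(2 * Real.pi)) (2 * Real.pi) := by
    rwa [intervalIntegrable_iff_integrableOn_Icc_of_le (by linarith)]
  have htr := hbig.comp_add_right a
  rw [intervalIntegrable_iff_integrableOn_Icc_of_le (by
      have := abs_le.1 ha; linarith [this.1, this.2])] at htr
  exact htr.mono_set (Set.Icc_subset_Icc (by have := abs_le.1 ha; linarith [this.2])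
    (by have := abs_le.1 ha; linarith [this.1]))

private lemma lemB {s : ℝ} (h0 : 0 < s) (h1 : s < 1) {c : ℝ → ℝ} (hc : Measurable c)
    (hc1 : ∀ y, |c y| ≤ 1) :
    Integrable (fun p : ℝ × ℝ =>
      (Set.Icc (-Real.pi) Real.pi ×ˢ Set.Icc (-Real.pi) Real.pi).indicator
        (fun q : ℝ × ℝ => |q.1 + c q.2| ^ (-s)) p) := by
  have pi_pos := Real.pi_pos
  have pi_gt : (1 : ℝ) ≤ Real.pi := by linarith [Real.pi_gt_three]
  set J := Set.Icc (-Real.pi) Real.pi with hJ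
  have hmeasJ : MeasurableSet (J ×ˢ J) := measurableSet_Icc.prod measurableSet_Icc
  have hmeasf : Measurable (fun q : ℝ × ℝ => |q.1 + c q.2| ^ (-s)) := by
    fun_prop
  set F := (J ×ˢ J).indicator (fun q : ℝ × ℝ => |q.1 + c q.2| ^ (-s)) with hF
  have hmeasF : Measurable F := hmeasf.indicator hmeasJ
  have hsec : ∀ y : ℝ, y ∈ J → (fun x => F (x, y)) =
      J.indicator (fun x : ℝ => |x + c y| ^ (-s)) := by
    intro y hy
    funext x
    by_cases hx : x ∈ J
    · simp [hF, Set.indicator_of_mem, Set.mk_mem_prod hx hy, hx]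
    · have : (x, y) ∉ J ×ˢ J := fun h => hx h.1
      simp [hF, Set.indicator_of_notMem, this, hx]
  have hsec' : ∀ y : ℝ, y ∉ J → (fun x => F (x, y)) = fun _ => (0 : ℝ) := by
    intro y hy
    funext x
    have : (x, y) ∉ J ×ˢ J := fun h => hy h.2
    simp [hF, Set.indicator_of_notMem, this]
  have hsecInt : ∀ y : ℝ, Integrable (fun x => F (x, y)) volume := by
    intro y
    by_cases hy : y ∈ J
    · rw [hsec y hy, integrable_indicator_iff measurableSet_Icc]
      exact translateIntOn h0 h1 ((hc1 y).trans pi_gt)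
    · rw [hsec' y hy]; exact integrable_zero _ _ _
  rw [Measure.volume_eq_prod ℝ ℝ, integrable_prod_iff' hmeasF.aestronglyMeasurable]
  refine ⟨Filter.Eventually.of_forall hsecInt, ?_⟩
  set C := ∫ u in Set.Icc (-(2 * Real.pi)) (2 * Real.pi), |u| ^ (-s) with hC
  have hCnn : 0 ≤ C :=
    setIntegral_nonneg measurableSet_Icc fun u _ => Real.rpow_nonneg (abs_nonneg u) _
  have hbigInd : Integrable
      ((Set.Icc (-(2 * Real.pi)) (2 * Real.pi)).indicator (fun u : ℝ => |u| ^ (-s))) volume :=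
    (integrable_indicator_iff measurableSet_Icc).2 (absRpowIntOn h0 h1 (by positivity))
  refine Integrable.mono' (g := fun y => J.indicator (fun _ => C) y)
    ((integrable_indicator_iff measurableSet_Icc).2
      (integrableOn_const measure_Icc_lt_top.ne))
    (hmeasF.norm.stronglyMeasurable.integral_prod_left').aestronglyMeasurable
    (Filter.Eventually.of_forall fun y => ?_)
  show ‖∫ x, ‖F (x, y)‖ ∂volume‖ ≤ J.indicator (fun _ => C) y
  rw [Real.norm_eq_abs, abs_of_nonneg (integral_nonneg fun x => norm_nonneg _)]
  by_cases hy : y ∈ J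
  · rw [Set.indicator_of_mem hy]
    have heq : ∀ x : ℝ, ‖F (x, y)‖ = J.indicator (fun x : ℝ => |x + c y| ^ (-s)) x := by
      intro x
      rw [show F (x, y) = (fun x => F (x, y)) x from rfl, hsec y hy, Real.norm_eq_abs,
        abs_of_nonneg (Set.indicator_nonneg (fun u _ => Real.rpow_nonneg (abs_nonneg _) _) x)]
    rw [integral_congr_ae (Filter.Eventually.of_forall heq)]
    have hle : ∀ x : ℝ, J.indicator (fun x : ℝ => |x + c y| ^ (-s)) x ≤
        ((Set.Icc (-(2 * Real.pi)) (2 * Real.pi)).indicator (fun u : ℝ => |u| ^ (-s))) (x + c y) := by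
      intro x
      by_cases hx : x ∈ J
      · rw [Set.indicator_of_mem hx]
        have hmem : x + c y ∈ Set.Icc (-(2 * Real.pi)) (2 * Real.pi) := by
          have h1 := abs_le.1 ((hc1 y).trans pi_gt)
          have h2 : -Real.pi ≤ x ∧ x ≤ Real.pi := hx
          constructor
          · linarith [h1.1, h2.1]
          · linarith [h1.2, h2.2]
        rw [Set.indicator_of_mem hmem]
      · rw [Set.indicator_of_notMem hx]
        exact Set.indicator_nonneg (fun u _ => Real.rpow_nonneg (abs_nonneg u) _) _
    have hint1 : Integrable (J.indicator (fun x : ℝ => |x + c y| ^ (-s))) volume := by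
      rw [integrable_indicator_iff measurableSet_Icc]
      exact translateIntOn h0 h1 ((hc1 y).trans pi_gt)
    have hint2 := hbigInd.comp_add_right (c y)
    calc ∫ x, J.indicator (fun x : ℝ => |x + c y| ^ (-s)) x
        ≤ ∫ x, ((Set.Icc (-(2 * Real.pi)) (2 * Real.pi)).indicator
            (fun u : ℝ => |u| ^ (-s))) (x + c y) := integral_mono hint1 hint2 hle
      _ = C := by
          rw [integral_add_right_eq_self, hC, integral_indicator measurableSet_Icc]
  · rw [Set.indicator_of_notMem hy]
    have heq : ∀ x : ℝ, ‖F (x, y)‖ = 0 := by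
      intro x
      rw [show F (x, y) = (fun x => F (x, y)) x from rfl, hsec' y hy]
      simp
    simp [heq]


set_option maxHeartbeats 1000000 in
/-- for `0 < α < 2`, the function
`(ξ, η, θ, φ) ↦ ((ξ + sin φ)² + (η − sin θ)² + (2 − cos θ − cos φ)²)^{−α/2}`
is Lebesgue integrable on `[−π, π]⁴` (convergence of the tube energy with exponent
`α < 2` near an isolated self-contact point). -/
theorem integrable_inverse_dist_pow_perpendicular_cylinders
    (α : ℝ) (h0 : 0 < α) (h2 : α < 2) :
    IntegrableOn
      (fun x : ℝ × ℝ × ℝ × ℝ =>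
        ((x.1 + Real.sin x.2.2.2) ^ 2 + (x.2.1 - Real.sin x.2.2.1) ^ 2 +
            (2 - Real.cos x.2.2.1 - Real.cos x.2.2.2) ^ 2) ^ (-(α / 2)))
      (Set.Icc (-Real.pi) Real.pi ×ˢ Set.Icc (-Real.pi) Real.pi ×ˢ
        Set.Icc (-Real.pi) Real.pi ×ˢ Set.Icc (-Real.pi) Real.pi) := by
  have h0s : 0 < α / 2 := by linarith
  have h1s : α / 2 < 1 := by linarith
  set s := α / 2 with hs
  set J := Set.Icc (-Real.pi) Real.pi with hJ
  set f : ℝ × ℝ × ℝ × ℝ → ℝ := fun x =>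
    ((x.1 + Real.sin x.2.2.2) ^ 2 + (x.2.1 - Real.sin x.2.2.1) ^ 2 +
      (2 - Real.cos x.2.2.1 - Real.cos x.2.2.2) ^ 2) ^ (-s) with hf
  set S : Set (ℝ × ℝ × ℝ × ℝ) := J ×ˢ J ×ˢ J ×ˢ J with hS
  have hmeasS : MeasurableSet S :=
    measurableSet_Icc.prod (measurableSet_Icc.prod (measurableSet_Icc.prod measurableSet_Icc))
  have hmeasf : Measurable f := by fun_prop
  rw [← integrable_indicator_iff hmeasS]
  -- the dominating product function
  set G₁ : ℝ × ℝ → ℝ := fun p =>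
    (J ×ˢ J).indicator (fun q : ℝ × ℝ => |q.1 + Real.sin q.2| ^ (-s)) p with hG₁
  set G₂ : ℝ × ℝ → ℝ := fun p =>
    (J ×ˢ J).indicator (fun q : ℝ × ℝ => |q.1 + -Real.sin q.2| ^ (-s)) p with hG₂
  have hG₁int : Integrable G₁ volume :=
    lemB h0s h1s Real.measurable_sin (fun y => abs_sin_le_one y)
  have hG₂int : Integrable G₂ volume :=
    lemB h0s h1s Real.measurable_sin.neg (fun y => by simpa using abs_sin_le_one y)
  set G : ℝ × ℝ × ℝ × ℝ → ℝ := fun x => G₁ (x.1, x.2.2.2) * G₂ (x.2.1, x.2.2.1) with hG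
  -- the reordering measurable equivalence
  set E : (ℝ × ℝ) × ℝ × ℝ ≃ᵐ ℝ × ℝ × ℝ × ℝ :=
    MeasurableEquiv.prodAssoc.trans
      ((MeasurableEquiv.refl ℝ).prodCongr
        (MeasurableEquiv.prodComm.trans MeasurableEquiv.prodAssoc)) with hE
  have hEapp : ∀ p : (ℝ × ℝ) × ℝ × ℝ, E p = (p.1.1, p.2.1, p.2.2, p.1.2) := fun p => rfl
  have hEmp : MeasurePreserving (⇑E) volume volume := by
    have h1 : MeasurePreserving
        (⇑(MeasurableEquiv.prodAssoc : (ℝ × ℝ) × (ℝ × ℝ) ≃ᵐ ℝ × ℝ × ℝ × ℝ))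
        volume volume :=
      measurePreserving_prodAssoc _ _ _
    have hinner : MeasurePreserving
        (⇑(MeasurableEquiv.prodComm.trans MeasurableEquiv.prodAssoc :
          ℝ × ℝ × ℝ ≃ᵐ ℝ × ℝ × ℝ)) volume volume :=
      (measurePreserving_prodAssoc _ _ _).comp Measure.measurePreserving_swap
    have h2 : MeasurePreserving
        (Prod.map (id : ℝ → ℝ)
          (⇑(MeasurableEquiv.prodComm.trans MeasurableEquiv.prodAssoc :
            ℝ × ℝ × ℝ ≃ᵐ ℝ × ℝ × ℝ))) volume volume :=
      (MeasurePreserving.id volume).prod hinner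
    exact h2.comp h1
  have hGint : Integrable G volume := by
    rw [← hEmp.integrable_comp_emb E.measurableEmbedding]
    have : (G ∘ ⇑E) = fun p : (ℝ × ℝ) × ℝ × ℝ => G₁ p.1 * G₂ p.2 := by
      funext p
      simp [Function.comp, hEapp p, hG]
    rw [this, Measure.volume_eq_prod]
    exact Integrable.mul_prod hG₁int hG₂int
  -- the null set where the bound fails
  set N₁ : Set (ℝ × ℝ × ℝ × ℝ) := {x | x.1 + Real.sin x.2.2.2 = 0} with hN₁
  set N₂ : Set (ℝ × ℝ × ℝ × ℝ) := {x | x.2.1 - Real.sin x.2.2.1 = 0} with hN₂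
  have graph_null : ∀ c : ℝ → ℝ, Measurable c →
      volume {q : ℝ × ℝ | q.1 - c q.2 = 0} = 0 := by
    intro c hc
    have hM' : MeasurableSet {r : ℝ × ℝ | r.2 - c r.1 = 0} :=
      measurableSet_eq_fun (measurable_snd.sub (hc.comp measurable_fst)) measurable_const
    have hM'null : (volume : Measure (ℝ × ℝ)) {r : ℝ × ℝ | r.2 - c r.1 = 0} = 0 := by
      rw [Measure.volume_eq_prod, Measure.measure_prod_null hM']
      refine Filter.Eventually.of_forall fun y => ?_
      have h5 : (Prod.mk y ⁻¹' {r : ℝ × ℝ | r.2 - c r.1 = 0}) = {c y} := by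
        ext x; simp [sub_eq_zero]
      show volume (Prod.mk y ⁻¹' {r : ℝ × ℝ | r.2 - c r.1 = 0}) = (0 : ℝ → ENNReal) y
      rw [h5]
      simp [Real.volume_singleton]
    have : {q : ℝ × ℝ | q.1 - c q.2 = 0} = Prod.swap ⁻¹' {r : ℝ × ℝ | r.2 - c r.1 = 0} := by
      ext q; simp [Prod.swap]
    rw [this, Measure.volume_eq_prod,
      Measure.measurePreserving_swap.measure_preimage hM'.nullMeasurableSet,
      ← Measure.volume_eq_prod, hM'null]
  have hN₁null : volume N₁ = 0 := by
    have hpre : (⇑E) ⁻¹' N₁ = {q : ℝ × ℝ | q.1 - -Real.sin q.2 = 0} ×ˢ (Set.univ : Set (ℝ × ℝ)) := by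
      ext p
      simp [hEapp p, hN₁, sub_neg_eq_add]
    have hmeasN₁ : MeasurableSet N₁ :=
      measurableSet_eq_fun (by fun_prop) measurable_const
    rw [← hEmp.measure_preimage hmeasN₁.nullMeasurableSet, hpre, Measure.volume_eq_prod,
      Measure.prod_prod, graph_null (fun y => -Real.sin y) Real.measurable_sin.neg, zero_mul]
  have hN₂null : volume N₂ = 0 := by
    have hpre : (⇑E) ⁻¹' N₂ = (Set.univ : Set (ℝ × ℝ)) ×ˢ {q : ℝ × ℝ | q.1 - Real.sin q.2 = 0} := by
      ext p
      simp [hEapp p, hN₂]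
    have hmeasN₂ : MeasurableSet N₂ :=
      measurableSet_eq_fun (by fun_prop) measurable_const
    rw [← hEmp.measure_preimage hmeasN₂.nullMeasurableSet, hpre, Measure.volume_eq_prod,
      Measure.prod_prod, graph_null _ Real.measurable_sin, mul_zero]
  have hNnull : volume (N₁ ∪ N₂) = 0 :=
    le_antisymm (le_trans (measure_union_le _ _) (by rw [hN₁null, hN₂null, add_zero])) zero_le
  -- conclude
  refine hGint.mono' (hmeasf.indicator hmeasS).aestronglyMeasurable ?_
  have hae : ∀ᵐ x : ℝ × ℝ × ℝ × ℝ, x ∉ N₁ ∪ N₂ :=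
    measure_eq_zero_iff_ae_notMem.mp hNnull
  filter_upwards [hae] with x hx
  have hGnn : 0 ≤ G x := mul_nonneg
    (Set.indicator_nonneg (fun q _ => Real.rpow_nonneg (abs_nonneg _) _) _)
    (Set.indicator_nonneg (fun q _ => Real.rpow_nonneg (abs_nonneg _) _) _)
  by_cases hxS : x ∈ S
  · rw [Set.indicator_of_mem hxS]
    obtain ⟨hx1, hx2, hx3, hx4⟩ : x.1 ∈ J ∧ x.2.1 ∈ J ∧ x.2.2.1 ∈ J ∧ x.2.2.2 ∈ J := hxS
    set A := x.1 + Real.sin x.2.2.2 with hA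
    set B := x.2.1 - Real.sin x.2.2.1 with hB
    set Cc := 2 - Real.cos x.2.2.1 - Real.cos x.2.2.2 with hCc
    have hAne : A ≠ 0 := fun h => hx (Or.inl h)
    have hBne : B ≠ 0 := fun h => hx (Or.inr h)
    have hG₁x : G₁ (x.1, x.2.2.2) = |A| ^ (-s) :=
      Set.indicator_of_mem (Set.mk_mem_prod hx1 hx4) _
    have hG₂x : G₂ (x.2.1, x.2.2.1) = |B| ^ (-s) := by
      refine (Set.indicator_of_mem (Set.mk_mem_prod hx2 hx3) _).trans ?_
      show |x.2.1 + -Real.sin x.2.2.1| ^ (-s) = |B| ^ (-s)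
      rw [hB, sub_eq_add_neg]
    have hfx : f x = (A ^ 2 + B ^ 2 + Cc ^ 2) ^ (-s) := rfl
    rw [Real.norm_eq_abs, hfx,
      abs_of_nonneg (Real.rpow_nonneg (by positivity) _)]
    show (A ^ 2 + B ^ 2 + Cc ^ 2) ^ (-s) ≤ G₁ (x.1, x.2.2.2) * G₂ (x.2.1, x.2.2.1)
    rw [hG₁x, hG₂x]
    have hABpos : 0 < |A| * |B| :=
      mul_pos (abs_pos.2 hAne) (abs_pos.2 hBne)
    have hle : |A| * |B| ≤ A ^ 2 + B ^ 2 + Cc ^ 2 := by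
      nlinarith [sq_nonneg (|A| - |B|), sq_nonneg Cc, abs_nonneg A, abs_nonneg B,
        sq_abs A, sq_abs B, mul_nonneg (abs_nonneg A) (abs_nonneg B)]
    calc (A ^ 2 + B ^ 2 + Cc ^ 2) ^ (-s) ≤ (|A| * |B|) ^ (-s) :=
          Real.rpow_le_rpow_of_nonpos hABpos hle (by linarith)
      _ = |A| ^ (-s) * |B| ^ (-s) := Real.mul_rpow (abs_nonneg _) (abs_nonneg _)
  · rw [Set.indicator_of_notMem hxS]
    simpa using hGnn
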